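/- Fix positive integers n, k, N, m with 1 ≤ m ≤ n. Let λ, μ ∈ ℕ^N be partitions with λ cuttable (admissible with λ_{N-n+1} = k, assuming N ≥ n), and suppose λ ≥_m μ ≥_{n-m} λ^↓, where α ≥_p β means α_i ≥ β_i ≥ α_{i+p} for all i (with α_i = 0 for i > N). Then μ_i = k for all N - n < i ≤ N - m, and μ_i = 0 for all i > N - m. -/
import Mathlib


/-- Extension of a finite tuple by zero. -/
def extZ {N : ℕ} (f : Fin N → ℕ) (j : ℕ) : ℕ := if h : j < N then f ⟨j, h⟩ else 0

/-- The interlacing relation `α ≥_p β`, i.e. `α_i ≥ β_i ≥ α_{i+p}` for all `i`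
(entries beyond the length being zero). -/
def Interlace (p : ℕ) (α β : ℕ → ℕ) : Prop := ∀ j : ℕ, β j ≤ α j ∧ α (j + p) ≤ β j

/-- Let `λ, μ ∈ ℕ^N` be partitions, with `λ` cuttable (admissible and
`λ_{N-n+1} = k`), and suppose `λ ≥_m μ ≥_{n-m} λ↓`.  Then `μ_i = k` for `N-n < i ≤ N-m`
and `μ_i = 0` for `i > N-m` (indices 1-based). -/
theorem statement7 (N n k m : ℕ) (hm : 1 ≤ m) (hmn : m ≤ n) (hnN : n ≤ N) (hk : 1 ≤ k)
    (lam mu : Fin N → ℕ) (hlam : Antitone lam) (hmu : Antitone mu)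
    (hadm : (∀ i, k ≤ lam i) ∧
      ∀ i : Fin N, ∀ h : (i : ℕ) + n < N, lam ⟨(i : ℕ) + n, h⟩ + k ≤ lam i)
    (hcut : ∀ h : N - n < N, lam ⟨N - n, h⟩ = k)
    (h1 : Interlace m (extZ lam) (extZ mu))
    (h2 : Interlace (n - m) (extZ mu) (extZ fun i => lam i - k)) :
    (∀ i : Fin N, N - n ≤ (i : ℕ) → (i : ℕ) < N - m → mu i = k) ∧
      (∀ i : Fin N, N - m ≤ (i : ℕ) → mu i = 0) := by
  have hnn : N - n < N := by omega
  have hcut' : lam ⟨N - n, hnn⟩ = k := hcut hnn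
  constructor
  · intro i hi1 hi2
    have hiN : (i : ℕ) < N := i.2
    have hmN : (i : ℕ) + m < N := by omega
    -- upper bound: mu i ≤ lam i ≤ lam (N-n) = k
    have hub : mu i ≤ k := by
      have e1 : extZ mu (i : ℕ) = mu i := by
        rw [extZ, dif_pos hiN]
      have e2 : extZ lam (i : ℕ) = lam i := by
        rw [extZ, dif_pos hiN]
      have h := (h1 (i : ℕ)).1
      rw [e1, e2] at h
      have h' : lam i ≤ lam ⟨N - n, hnn⟩ := hlam (by exact hi1)
      omega
    -- lower bound: k ≤ lam (i+m) ≤ mu i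
    have hlb : k ≤ mu i := by
      have e1 : extZ mu (i : ℕ) = mu i := by
        rw [extZ, dif_pos hiN]
      have e2 : extZ lam ((i : ℕ) + m) = lam ⟨(i : ℕ) + m, hmN⟩ := by
        rw [extZ, dif_pos hmN]
      have h := (h1 (i : ℕ)).2
      rw [e1, e2] at h
      have h' := hadm.1 ⟨(i : ℕ) + m, hmN⟩
      omega
    omega
  · intro i hi
    have hiN : (i : ℕ) < N := i.2
    have hj : (i : ℕ) - (n - m) + (n - m) = (i : ℕ) := by omega
    have hjN : (i : ℕ) - (n - m) < N := by omega
    have h := (h2 ((i : ℕ) - (n - m))).2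
    rw [hj] at h
    have e1 : extZ mu (i : ℕ) = mu i := by
      rw [extZ, dif_pos hiN]
    have e2 : extZ (fun i => lam i - k) ((i : ℕ) - (n - m))
        = lam ⟨(i : ℕ) - (n - m), hjN⟩ - k := by
      rw [extZ, dif_pos hjN]
    rw [e1, e2] at h
    have h' : lam ⟨(i : ℕ) - (n - m), hjN⟩ ≤ lam ⟨N - n, hnn⟩ :=
      hlam (by simp only [Fin.mk_le_mk]; omega)
    omega
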